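/- The bigraded generating function 1 + ∑_{u=1}^∞ [ ((d−1)u+1) w^u + e ∑_{i=1}^u w^{u+i(e−1)} ] z^u equals (1 + (d−2)wz + (e−1)w^e z − (d+e−2) w^{e+1} z²) / ((1−wz)²(1−w^e z)), as formal power series in z with coefficients in ℚ[[w]] (equivalently in ℚ[[w,z]]). -/

import Mathlib

open PowerSeries

section Aux
variable {R : Type*} [CommRing R]

lemma geomAux (a : R) : (PowerSeries.mk fun n => a ^ n) * (1 - PowerSeries.C (R := R) a * X) = 1 := by
  ext n
  rw [mul_sub, mul_one, map_sub]
  cases n with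
  | zero => simp
  | succ n =>
    have h : (PowerSeries.mk fun n => a ^ n) * (PowerSeries.C (R := R) a * X)
        = PowerSeries.C (R := R) a * (X * PowerSeries.mk fun n => a ^ n) := by ring
    rw [h, coeff_C_mul, coeff_succ_X_mul, coeff_mk, coeff_mk, coeff_one]
    simp [pow_succ, mul_comm]

lemma prodAux (a b : R) : (PowerSeries.mk fun n => a ^ n) * (PowerSeries.mk fun n => b ^ n)
    = PowerSeries.mk fun n => ∑ i ∈ Finset.range (n + 1), a ^ i * b ^ (n - i) := by
  ext n
  simp [coeff_mul, Finset.Nat.sum_antidiagonal_eq_sum_range_succ_mk]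

lemma linAux (a : R) : (PowerSeries.mk fun n => (n : R) * a ^ n)
    = PowerSeries.C (R := R) a * X * ((PowerSeries.mk fun n => a ^ n) * (PowerSeries.mk fun n => a ^ n)) := by
  rw [prodAux]
  ext n
  cases n with
  | zero => simp
  | succ n =>
    have h : PowerSeries.C (R := R) a * X * (PowerSeries.mk fun n => ∑ i ∈ Finset.range (n + 1), a ^ i * a ^ (n - i))
        = PowerSeries.C (R := R) a * (X * PowerSeries.mk fun n => ∑ i ∈ Finset.range (n + 1), a ^ i * a ^ (n - i)) := by
      ring
    rw [h, coeff_C_mul, coeff_succ_X_mul, coeff_mk, coeff_mk]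
    have hs : ∑ i ∈ Finset.range (n + 1), a ^ i * a ^ (n - i) = (n + 1 : ℕ) • a ^ n := by
      calc ∑ i ∈ Finset.range (n + 1), a ^ i * a ^ (n - i)
          = ∑ _i ∈ Finset.range (n + 1), a ^ n := by
            refine Finset.sum_congr rfl fun i hi => ?_
            rw [Finset.mem_range] at hi
            rw [← pow_add]
            congr 1
            omega
        _ = (n + 1 : ℕ) • a ^ n := by rw [Finset.sum_const, Finset.card_range]
    rw [hs, nsmul_eq_mul]
    push_cast
    ring

lemma linAux2 (a : R) : (PowerSeries.mk fun n => (n : R) * a ^ n) * (1 - PowerSeries.C (R := R) a * X) ^ 2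
    = PowerSeries.C (R := R) a * X := by
  rw [linAux]
  have h : PowerSeries.C (R := R) a * X * ((PowerSeries.mk fun n => a ^ n) * (PowerSeries.mk fun n => a ^ n))
        * (1 - PowerSeries.C (R := R) a * X) ^ 2
      = PowerSeries.C (R := R) a * X * (((PowerSeries.mk fun n => a ^ n) * (1 - PowerSeries.C (R := R) a * X))
        * ((PowerSeries.mk fun n => a ^ n) * (1 - PowerSeries.C (R := R) a * X))) := by ring
  rw [h, geomAux, one_mul, mul_one]

end Aux

/-- The bigraded Hilbert series identity
`1 + ∑_{u=1}^∞ [((d−1)u+1)w^u + e ∑_{i=1}^u w^{u+i(e−1)}] z^u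
  = (1 + (d−2)wz + (e−1)w^e z − (d+e−2)w^{e+1}z²) / ((1−wz)²(1−w^e z))`,
as formal power series in `z` with coefficients in `ℚ[[w]]`
(stated with denominators cleared; the inner variable `w` is `PowerSeries.X : ℚ[[w]]`,
the outer variable `z` is `PowerSeries.X` and `W` denotes the constant series `w`). -/
theorem stmt14 (d e : ℕ) (hd : 1 ≤ d) (he : 2 ≤ e) :
    (PowerSeries.mk (fun u =>
        ((((d - 1) * u + 1 : ℕ) : PowerSeries ℚ) * X ^ u +
          (e : PowerSeries ℚ) * ∑ i ∈ Finset.Icc 1 u, X ^ (u + i * (e - 1)))) :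
        PowerSeries (PowerSeries ℚ)) *
      ((1 - PowerSeries.C (R := PowerSeries ℚ) X * X) ^ 2 *
        (1 - PowerSeries.C (R := PowerSeries ℚ) X ^ e * X)) =
    1 + ((d : PowerSeries (PowerSeries ℚ)) - 2) * PowerSeries.C (R := PowerSeries ℚ) X * X +
      ((e : PowerSeries (PowerSeries ℚ)) - 1) * PowerSeries.C (R := PowerSeries ℚ) X ^ e * X -
      ((d : PowerSeries (PowerSeries ℚ)) + (e : PowerSeries (PowerSeries ℚ)) - 2) *
        PowerSeries.C (R := PowerSeries ℚ) X ^ (e + 1) * X ^ 2 := by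
  set R := PowerSeries ℚ
  set A : R := X with hA
  set B : R := X ^ e with hB
  set G : PowerSeries R := PowerSeries.mk fun n => A ^ n with hG
  set Gb : PowerSeries R := PowerSeries.mk fun n => B ^ n with hGb
  set M : PowerSeries R := PowerSeries.mk fun n => (n : R) * A ^ n with hM
  set c1 : R := (d : R) - 1 with hc1
  have hdec : (PowerSeries.mk (fun u =>
        ((((d - 1) * u + 1 : ℕ) : R) * A ^ u +
          (e : R) * ∑ i ∈ Finset.Icc 1 u, A ^ (u + i * (e - 1)))) : PowerSeries R)
      = PowerSeries.C (R := R) c1 * M + G + PowerSeries.C (R := R) (e : R) * (G * Gb - G) := by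
    rw [hG, hGb, hM, prodAux]
    ext1 u
    simp only [coeff_mk, map_add, map_sub, coeff_C_mul]

    have hsum : ∑ i ∈ Finset.Icc 1 u, (A : R) ^ (u + i * (e - 1))
        = (∑ i ∈ Finset.range (u + 1), A ^ i * B ^ (u - i)) - A ^ u := by
      rw [Finset.sum_range_succ]
      simp only [Nat.sub_self, pow_zero, mul_one, add_sub_cancel_right]
      refine Finset.sum_nbij' (fun i => u - i) (fun j => u - j) ?_ ?_ ?_ ?_ ?_
      · intro i hi; rw [Finset.mem_Icc] at hi; rw [Finset.mem_range]; omega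
      · intro j hj; rw [Finset.mem_range] at hj; rw [Finset.mem_Icc]; omega
      · intro i hi; rw [Finset.mem_Icc] at hi; omega
      · intro j hj; rw [Finset.mem_range] at hj; omega
      · intro i hi
        rw [Finset.mem_Icc] at hi
        rw [hA, hB, ← pow_mul, ← pow_add]
        congr 1
        have h2 : u - (u - i) = i := by omega
        rw [h2]
        zify [hi.2, (by omega : 1 ≤ e)]
        ring
    rw [hsum]
    have hc : (((d - 1) * u + 1 : ℕ) : R) = c1 * (u : R) + 1 := by
      rw [hc1]
      push_cast [Nat.cast_sub hd]
      have hm : (((d - 1) * u : ℕ) : R) = ((d - 1 : ℕ) : R) * (u : R) := Nat.cast_mul (α := PowerSeries ℚ) _ _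
      have hs : ((d - 1 : ℕ) : R) = (d : R) - 1 := by rw [Nat.cast_sub hd, Nat.cast_one]
      rw [hm, hs]
    rw [hc]
    ring
  have g1 : G * (1 - PowerSeries.C (R := R) A * X) = 1 := geomAux A
  have g2 : Gb * (1 - PowerSeries.C (R := R) B * X) = 1 := geomAux B
  have g3 : M * (1 - PowerSeries.C (R := R) A * X) ^ 2 = PowerSeries.C (R := R) A * X := linAux2 A
  have hBC : PowerSeries.C (R := R) A ^ e = PowerSeries.C (R := R) B := by rw [hB, map_pow]
  have hdC : (PowerSeries.C (R := R) (d : R) : PowerSeries R) = (d : PowerSeries R) := by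
    rw [map_natCast]
  have heC : (PowerSeries.C (R := R) (e : R) : PowerSeries R) = (e : PowerSeries R) := by
    rw [map_natCast]
  have hCsub : PowerSeries.C (R := R) c1 = (d : PowerSeries R) - 1 := by
    rw [hc1, map_sub, map_one, map_natCast]
  rw [hdec, hCsub, heC]
  rw [← hBC] at g2
  linear_combination (((d : PowerSeries R) - 1) * (1 - PowerSeries.C (R := R) A ^ e * X)) * g3
    + ((1 - PowerSeries.C (R := R) A * X) * (1 - PowerSeries.C (R := R) A ^ e * X)
        - (e : PowerSeries R) * (1 - PowerSeries.C (R := R) A * X) * (1 - PowerSeries.C (R := R) A ^ e * X)) * g1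
    + ((e : PowerSeries R) * (1 - PowerSeries.C (R := R) A * X) * (1 - PowerSeries.C (R := R) A ^ e * X) * Gb) * g1
    + ((e : PowerSeries R) * (1 - PowerSeries.C (R := R) A * X)) * g2
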